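/- Let p ∈ (0,1] and let H_n(B) = ∑_{k=0}^n C(n,k) p^k (1-p)^{n-k} R_k(B) for Borel probability measures R_k on ℝ^m. If R_n converges weakly to a Borel probability measure L, then H_n converges weakly to the same limit L. -/

import Mathlib

open MeasureTheory ENNReal BoundedContinuousFunction

/-- A Toeplitz-type averaging lemma: nonnegative weights summing to one whose individual
columns tend to zero transform a bounded sequence tending to zero into a sequence
tending to zero. -/
lemma toeplitz_aux
    {w : ℕ → ℕ → ℝ} (hw0 : ∀ n k, 0 ≤ w n k)
    (hsum : ∀ n, ∑ k ∈ Finset.range (n + 1), w n k = 1)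
    (hcol : ∀ k, Filter.Tendsto (fun n => w n k) Filter.atTop (nhds 0))
    {b : ℕ → ℝ} {M : ℝ} (hM : ∀ k, |b k| ≤ M)
    (hb : Filter.Tendsto b Filter.atTop (nhds 0)) :
    Filter.Tendsto (fun n => ∑ k ∈ Finset.range (n + 1), w n k * b k)
      Filter.atTop (nhds 0) := by
  have hM0 : 0 ≤ M := le_trans (abs_nonneg _) (hM 0)
  rw [Metric.tendsto_atTop]
  intro ε hε
  obtain ⟨K, hK⟩ := (Metric.tendsto_atTop.mp hb) (ε / 4) (by positivity)
  have hcolsum : Filter.Tendsto (fun n => ∑ k ∈ Finset.range K, w n k)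
      Filter.atTop (nhds 0) := by
    have := tendsto_finset_sum (Finset.range K)
      (fun k (_ : k ∈ Finset.range K) => hcol k)
    simpa using this
  obtain ⟨N, hN⟩ := (Metric.tendsto_atTop.mp hcolsum) (ε / (4 * (M + 1))) (by positivity)
  refine ⟨max N K, fun n hn => ?_⟩
  have hnN : N ≤ n := le_trans (le_max_left _ _) hn
  have hnK : K ≤ n := le_trans (le_max_right _ _) hn
  have hwsmall : ∑ k ∈ Finset.range K, w n k ≤ ε / (4 * (M + 1)) := by
    have h := hN n hnN
    rw [Real.dist_eq, sub_zero,
      abs_of_nonneg (Finset.sum_nonneg fun k _ => hw0 n k)] at h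
    exact h.le
  rw [Real.dist_eq, sub_zero]
  have habs : |∑ k ∈ Finset.range (n + 1), w n k * b k|
      ≤ ∑ k ∈ Finset.range (n + 1), w n k * |b k| := by
    refine (Finset.abs_sum_le_sum_abs _ _).trans ?_
    refine Finset.sum_le_sum fun k _ => ?_
    rw [abs_mul, abs_of_nonneg (hw0 n k)]
  have hsplit : ∑ k ∈ Finset.range (n + 1), w n k * |b k|
      = ∑ k ∈ Finset.range K, w n k * |b k|
        + ∑ k ∈ Finset.Ico K (n + 1), w n k * |b k| := by
    rw [Finset.range_eq_Ico, ← Finset.sum_Ico_consecutive _ (Nat.zero_le K) (by omega),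
      ← Finset.range_eq_Ico]
  have h1 : ∑ k ∈ Finset.range K, w n k * |b k| ≤ ε / 4 := by
    calc ∑ k ∈ Finset.range K, w n k * |b k|
        ≤ ∑ k ∈ Finset.range K, w n k * (M + 1) :=
          Finset.sum_le_sum fun k _ =>
            mul_le_mul_of_nonneg_left (le_trans (hM k) (by linarith)) (hw0 n k)
      _ = (∑ k ∈ Finset.range K, w n k) * (M + 1) := by rw [← Finset.sum_mul]
      _ ≤ (ε / (4 * (M + 1))) * (M + 1) :=
          mul_le_mul_of_nonneg_right hwsmall (by linarith)
      _ = ε / 4 := by field_simp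
  have h2 : ∑ k ∈ Finset.Ico K (n + 1), w n k * |b k| ≤ ε / 4 := by
    calc ∑ k ∈ Finset.Ico K (n + 1), w n k * |b k|
        ≤ ∑ k ∈ Finset.Ico K (n + 1), w n k * (ε / 4) := by
          refine Finset.sum_le_sum fun k hk => ?_
          have hk' := hK k (Finset.mem_Ico.mp hk).1
          rw [Real.dist_eq, sub_zero] at hk'
          exact mul_le_mul_of_nonneg_left hk'.le (hw0 n k)
      _ = (∑ k ∈ Finset.Ico K (n + 1), w n k) * (ε / 4) := by rw [← Finset.sum_mul]
      _ ≤ 1 * (ε / 4) := by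
          refine mul_le_mul_of_nonneg_right ?_ (by positivity)
          calc ∑ k ∈ Finset.Ico K (n + 1), w n k
              ≤ ∑ k ∈ Finset.range (n + 1), w n k :=
                Finset.sum_le_sum_of_subset_of_nonneg
                  (by rw [Finset.range_eq_Ico]
                      exact Finset.Ico_subset_Ico (Nat.zero_le _) le_rfl)
                  (fun k _ _ => hw0 n k)
            _ = 1 := hsum n
      _ = ε / 4 := one_mul _
  calc |∑ k ∈ Finset.range (n + 1), w n k * b k|
      ≤ ∑ k ∈ Finset.range (n + 1), w n k * |b k| := habs
    _ = _ := hsplit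
    _ ≤ ε / 4 + ε / 4 := add_le_add h1 h2
    _ < ε := by linarith

/-- Corollary (b) of Koul, Müller and Schick: if `R_n` converges weakly to a Borel
probability measure `L`, then the binomial mixtures
`H_n = ∑_{k=0}^n C(n,k) p^k (1-p)^{n-k} R_k` converge weakly to the same limit `L`. -/
theorem binomial_mixture_weak_convergence
    {m : ℕ} (p : ℝ≥0∞) (hp0 : 0 < p) (hp1 : p ≤ 1)
    (R : ℕ → Measure (Fin m → ℝ)) (hRprob : ∀ k, IsProbabilityMeasure (R k))
    (L : Measure (Fin m → ℝ)) [IsProbabilityMeasure L]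
    (H : ℕ → Measure (Fin m → ℝ))
    (hH : ∀ n, H n = ∑ k ∈ Finset.range (n + 1),
      ((n.choose k : ℝ≥0∞) * p ^ k * (1 - p) ^ (n - k)) • R k)
    -- weak convergence of `R_n` to `L`
    (hRL : ∀ f : (Fin m → ℝ) →ᵇ ℝ,
      Filter.Tendsto (fun n => ∫ x, f x ∂(R n)) Filter.atTop (nhds (∫ x, f x ∂L))) :
    -- weak convergence of `H_n` to `L`
    ∀ f : (Fin m → ℝ) →ᵇ ℝ,
      Filter.Tendsto (fun n => ∫ x, f x ∂(H n)) Filter.atTop (nhds (∫ x, f x ∂L)) := by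
  intro f
  have hpne : p ≠ ∞ := fun h => by simp [h] at hp1
  set c : ℕ → ℕ → ℝ≥0∞ :=
    fun n k => (n.choose k : ℝ≥0∞) * p ^ k * (1 - p) ^ (n - k) with hc
  -- the weights sum to 1 in `ℝ≥0∞`
  have hsum1 : ∀ n, ∑ k ∈ Finset.range (n + 1), c n k = 1 := by
    intro n
    have h := add_pow p (1 - p) n
    rw [add_tsub_cancel_of_le hp1, one_pow] at h
    rw [h]
    refine Finset.sum_congr rfl fun k _ => ?_
    simp [hc]; ring
  have hcne : ∀ n k, k ∈ Finset.range (n + 1) → c n k ≠ ∞ := by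
    intro n k hk
    have : c n k ≤ 1 := by
      rw [← hsum1 n]
      exact Finset.single_le_sum (fun i _ => zero_le) hk
    exact ne_top_of_le_ne_top one_ne_top this
  -- real weights
  set w : ℕ → ℕ → ℝ := fun n k => (c n k).toReal with hwdef
  have hw0 : ∀ n k, 0 ≤ w n k := fun n k => toReal_nonneg
  have hwsum : ∀ n, ∑ k ∈ Finset.range (n + 1), w n k = 1 := by
    intro n
    rw [hwdef, ← ENNReal.toReal_sum (hcne n), hsum1 n, ENNReal.toReal_one]
  -- explicit real form of the weights
  set pr : ℝ := p.toReal with hprdef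
  set q : ℝ := (1 - p).toReal with hqdef
  have hq_eq : q = 1 - pr := by
    rw [hqdef, hprdef, ENNReal.toReal_sub_of_le hp1 one_ne_top, ENNReal.toReal_one]
  have hpr_pos : 0 < pr := ENNReal.toReal_pos hp0.ne' hpne
  have hpr_le : pr ≤ 1 := by
    rw [hprdef]
    simpa using ENNReal.toReal_mono one_ne_top hp1
  have hq0 : 0 ≤ q := toReal_nonneg
  have hq1 : q < 1 := by rw [hq_eq]; linarith
  have hw_eq : ∀ n k, w n k = (n.choose k : ℝ) * pr ^ k * q ^ (n - k) := by
    intro n k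
    rw [hwdef, hc]
    simp [ENNReal.toReal_mul, ENNReal.toReal_pow]
    rfl
  -- each column of weights tends to zero
  have hcol : ∀ k, Filter.Tendsto (fun n => w n k) Filter.atTop (nhds 0) := by
    intro k
    by_cases hq : q = 0
    · refine Filter.Tendsto.congr' ?_ tendsto_const_nhds
      filter_upwards [Filter.eventually_ge_atTop (k + 1)] with n hn
      rw [hw_eq n k, hq, zero_pow (by omega)]
      ring
    · have hqpos : 0 < q := lt_of_le_of_ne hq0 (Ne.symm hq)
      have hg : Filter.Tendsto (fun n : ℕ => ((n : ℝ) ^ k * q ^ n) / q ^ k)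
          Filter.atTop (nhds 0) := by
        have := (tendsto_pow_const_mul_const_pow_of_lt_one k hq0 hq1).div_const (q ^ k)
        simpa using this
      refine squeeze_zero' (Filter.Eventually.of_forall fun n => hw0 n k) ?_ hg
      filter_upwards [Filter.eventually_ge_atTop k] with n hn
      rw [hw_eq n k]
      have h1 : (n.choose k : ℝ) ≤ (n : ℝ) ^ k := by
        exact_mod_cast Nat.choose_le_pow n k
      have h2 : pr ^ k ≤ 1 := pow_le_one₀ hpr_pos.le hpr_le
      have h3 : q ^ (n - k) = q ^ n / q ^ k := by
        rw [pow_sub₀ q hq hn, div_eq_mul_inv]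
      rw [h3]
      calc (n.choose k : ℝ) * pr ^ k * (q ^ n / q ^ k)
          ≤ (n : ℝ) ^ k * 1 * (q ^ n / q ^ k) := by
            apply mul_le_mul_of_nonneg_right _ (by positivity)
            exact mul_le_mul h1 h2 (by positivity) (by positivity)
        _ = (n : ℝ) ^ k * q ^ n / q ^ k := by ring
  -- the integral of `f` against `H n`
  have hint : ∀ n, ∫ x, f x ∂(H n)
      = ∑ k ∈ Finset.range (n + 1), w n k * (∫ x, f x ∂(R k)) := by
    intro n
    rw [hH n]
    rw [integral_finset_sum_measure (fun k hk => ?_)]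
    · refine Finset.sum_congr rfl fun k hk => ?_
      rw [integral_smul_measure]
      rfl
    · haveI := hRprob k
      haveI : IsFiniteMeasure (c n k • R k) := by
        constructor
        rw [Measure.smul_apply, measure_univ, smul_eq_mul, mul_one]
        exact lt_top_iff_ne_top.mpr (hcne n k hk)
      exact f.integrable _
  -- conclude via the Toeplitz lemma
  set a : ℕ → ℝ := fun k => ∫ x, f x ∂(R k) with hadef
  set aL : ℝ := ∫ x, f x ∂L with haLdef
  have hb : Filter.Tendsto (fun k => a k - aL) Filter.atTop (nhds 0) :=
    tendsto_sub_nhds_zero_iff.mpr (hRL f)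
  have hM : ∀ k, |a k - aL| ≤ 2 * ‖f‖ := by
    intro k
    haveI := hRprob k
    have h1 : |a k| ≤ ‖f‖ := f.norm_integral_le_norm (R k)
    have h2 : |aL| ≤ ‖f‖ := f.norm_integral_le_norm L
    calc |a k - aL| ≤ |a k| + |aL| := abs_sub _ _
      _ ≤ 2 * ‖f‖ := by linarith
  have key := toeplitz_aux hw0 hwsum hcol hM hb
  rw [← tendsto_sub_nhds_zero_iff]
  refine key.congr fun n => ?_
  have : ∑ k ∈ Finset.range (n + 1), w n k * (a k - aL)
      = (∑ k ∈ Finset.range (n + 1), w n k * a k)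
        - (∑ k ∈ Finset.range (n + 1), w n k) * aL := by
    rw [Finset.sum_mul, ← Finset.sum_sub_distrib]
    exact Finset.sum_congr rfl fun k _ => by ring
  rw [this, hwsum n, one_mul, hint n]
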